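/- For any finite sequence τ of distinct natural numbers and any natural number k not occurring in τ: des f(k,τ) = des τ if and only if aix f(k,τ) = aix τ + 1 (in particular aix f(k,τ) > 0); and des f(k,τ) > des τ if and only if aix f(k,τ) = 0. -/

import Mathlib

namespace PaperStats

/-- `des w` is the number of descents of the word `w` (0-indexed positions `i`
with `w(i) > w(i+1)`). -/
def des (w : List ℕ) : ℕ :=
  ((Finset.range (w.length - 1)).filter fun i => w.getD (i + 1) 0 < w.getD i 0).card

/-- `inv w` is the number of inversions of the word `w`: pairs of positions
`i < j` with `w(i) > w(j)`. -/
def inv (w : List ℕ) : ℕ :=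
  ((Finset.range w.length ×ˢ Finset.range w.length).filter
    fun p => p.1 < p.2 ∧ w.getD p.2 0 < w.getD p.1 0).card

/-- An inversion `(i,j)` of `w` is admissible if either `w(j) < w(j+1)`
(`j` is not the last position and is followed by an ascent), or there is a
position `k` strictly between `i` and `j` with `w(j) > w(k)`. -/
def IsAdmissible (w : List ℕ) (i j : ℕ) : Prop :=
  (j + 1 < w.length ∧ w.getD j 0 < w.getD (j + 1) 0) ∨
    ∃ k, i < k ∧ k < j ∧ w.getD k 0 < w.getD j 0

instance (w : List ℕ) (i j : ℕ) : Decidable (IsAdmissible w i j) :=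
  decidable_of_iff ((j + 1 < w.length ∧ w.getD j 0 < w.getD (j + 1) 0) ∨
      ∃ k ∈ Finset.Ioo i j, w.getD k 0 < w.getD j 0) (by
    unfold IsAdmissible
    simp only [Finset.mem_Ioo, and_assoc])

/-- `ai w` is the number of admissible inversions of `w`. -/
def ai (w : List ℕ) : ℕ :=
  ((Finset.range w.length ×ˢ Finset.range w.length).filter
    fun p => p.1 < p.2 ∧ w.getD p.2 0 < w.getD p.1 0 ∧ IsAdmissible w p.1 p.2).card

/-- `aid w = ai w + des w`. -/
def aid (w : List ℕ) : ℕ := ai w + des w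

/-- The statistic `aix`, defined recursively: `aix ∅ = 0`; writing a nonempty
word as `π = α m β`, where `m` is the smallest letter and `α` is the maximal
prefix not containing `m`, one has `aix π = 1 + aix β` if `α = ∅`,
`aix π = 0` if `β = ∅` (and `α ≠ ∅`), and `aix π = aix α` otherwise. -/
def aix : List ℕ → ℕ
  | [] => 0
  | x :: xs =>
    if (x :: xs).takeWhile (fun a => decide (a ≠ xs.foldr min x)) = [] then
      1 + aix (((x :: xs).dropWhile (fun a => decide (a ≠ xs.foldr min x))).tail)
    else if ((x :: xs).dropWhile (fun a => decide (a ≠ xs.foldr min x))).tail = [] then 0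
    else aix ((x :: xs).takeWhile (fun a => decide (a ≠ xs.foldr min x)))
termination_by w => w.length
decreasing_by
  all_goals try simp only [List.foldr_subtype, List.unattach_attach] at *
  · have h1 := (List.dropWhile_sublist (l := x :: xs) (fun a => decide (a ≠ xs.foldr min x))).length_le
    have h2 := List.length_tail (l := (x :: xs).dropWhile (fun a => decide (a ≠ xs.foldr min x)))
    simp only [List.length_cons] at *
    omega
  · rename_i hα hβ
    have h0 : ((x :: xs).takeWhile (fun a => decide (a ≠ xs.foldr min x))) ++
        ((x :: xs).dropWhile (fun a => decide (a ≠ xs.foldr min x))) = x :: xs :=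
      List.takeWhile_append_dropWhile ..
    have h1 : ((x :: xs).dropWhile (fun a => decide (a ≠ xs.foldr min x))) ≠ [] := by
      intro h
      apply hβ
      rw [h]
      rfl
    have h2 := congrArg List.length h0
    simp only [List.length_append, List.length_cons] at h2
    have h3 : 0 < ((x :: xs).dropWhile (fun a => decide (a ≠ xs.foldr min x))).length :=
      List.length_pos_iff.mpr h1
    simp only [List.length_cons]
    omega

/-- The map `f(k,τ)`: with `m` the smallest letter of `τ` together with `k`
(`k` not occurring in `τ`), and `τ = α m β` with `α` the maximal prefix of `τ`
avoiding `m`: `f(k,∅) = k`; `f(k,τ) = kτ` if `k = m`; and for `k > m`,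
`f(k,τ) = f(k,β) m` if `α = ∅`, `f(k,τ) = k m α` if `β = ∅`, and
`f(k,τ) = f(k,α) m β` otherwise. -/
def fkt (k : ℕ) : List ℕ → List ℕ
  | [] => [k]
  | x :: xs =>
    if k < xs.foldr min x then k :: x :: xs
    else if (x :: xs).takeWhile (fun a => decide (a ≠ xs.foldr min x)) = [] then
      fkt k (((x :: xs).dropWhile (fun a => decide (a ≠ xs.foldr min x))).tail) ++
        [xs.foldr min x]
    else if ((x :: xs).dropWhile (fun a => decide (a ≠ xs.foldr min x))).tail = [] then
      k :: xs.foldr min x :: ((x :: xs).takeWhile (fun a => decide (a ≠ xs.foldr min x)))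
    else
      fkt k ((x :: xs).takeWhile (fun a => decide (a ≠ xs.foldr min x))) ++
        xs.foldr min x :: ((x :: xs).dropWhile (fun a => decide (a ≠ xs.foldr min x))).tail
termination_by w => w.length
decreasing_by
  all_goals try simp only [List.foldr_subtype, List.unattach_attach] at *
  · have h1 := (List.dropWhile_sublist (l := x :: xs) (fun a => decide (a ≠ xs.foldr min x))).length_le
    have h2 := List.length_tail (l := (x :: xs).dropWhile (fun a => decide (a ≠ xs.foldr min x)))
    simp only [List.length_cons] at *
    omega
  · rename_i hk hα hβ
    have h0 : ((x :: xs).takeWhile (fun a => decide (a ≠ xs.foldr min x))) ++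
        ((x :: xs).dropWhile (fun a => decide (a ≠ xs.foldr min x))) = x :: xs :=
      List.takeWhile_append_dropWhile ..
    have h1 : ((x :: xs).dropWhile (fun a => decide (a ≠ xs.foldr min x))) ≠ [] := by
      intro h
      apply hβ
      rw [h]
      rfl
    have h2 := congrArg List.length h0
    simp only [List.length_append, List.length_cons] at h2
    have h3 : 0 < ((x :: xs).dropWhile (fun a => decide (a ≠ xs.foldr min x))).length :=
      List.length_pos_iff.mpr h1
    simp only [List.length_cons]
    omega

/-- `ini w` is the first letter of `w`. -/
def ini (w : List ℕ) : ℕ := w.headD 0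

/-- The word of a permutation `π ∈ S_n`, namely `π(1) π(2) … π(n)`
(with values in `{1, …, n}`). -/
def permList {n : ℕ} (π : Equiv.Perm (Fin n)) : List ℕ :=
  List.ofFn fun i => (π i : ℕ) + 1

/-- The bijection `φ`: `φ(π) = f(π(1), f(π(2), ⋯ f(π(n), ∅) ⋯ ))`. -/
def phiW (w : List ℕ) : List ℕ := w.foldr fkt []

/-- Helper: `decRun l` splits `l` into its maximal weakly decreasing prefix
and the rest. -/
def decRun : List ℕ → List ℕ × List ℕ
  | [] => ([], [])
  | [x] => ([x], [])
  | x :: y :: rest =>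
    if y ≤ x then ((x :: (decRun (y :: rest)).1), (decRun (y :: rest)).2)
    else ([x], y :: rest)

theorem decRun_append : ∀ l : List ℕ, (decRun l).1 ++ (decRun l).2 = l
  | [] => rfl
  | [x] => rfl
  | x :: y :: rest => by
    rw [decRun]
    split
    · simpa using decRun_append (y :: rest)
    · rfl

/-- Helper computing the hook factorization of a word from its reversal: the
rightmost hook of the word starts at its rightmost descent top, i.e. it is
obtained by extending the maximal weakly decreasing prefix of the reversed word
by one more letter; the process is repeated on what remains, and when no
letters usable for a hook remain the word left over is the increasing part
`π₀`. The result is `(π₀, [π₁, …, π_k])`. -/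
def hookRev (r : List ℕ) : List ℕ × List (List ℕ) :=
  match h : (decRun r).2 with
  | [] => (r.reverse, [])
  | z :: rest =>
    ((hookRev rest).1, (hookRev rest).2 ++ [z :: (decRun r).1.reverse])
termination_by r.length
decreasing_by
  have h2 := congrArg List.length (decRun_append r)
  rw [h] at h2
  simp only [List.length_append, List.length_cons] at h2
  omega

/-- The hook factorization `(π₀, [π₁, …, π_k])` of a word
`w = π₀ π₁ ⋯ π_k`, where `π₀` is increasing and each `π_i`, `i ≥ 1`, is a
hook. -/
def hookSplit (w : List ℕ) : List ℕ × List (List ℕ) := hookRev w.reverse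

/-- `pix w` is the length of the initial increasing factor `π₀` in the hook
factorization of `w`. -/
def pix (w : List ℕ) : ℕ := (hookSplit w).1.length

/-- `lec w` is the sum of the numbers of inversions of the hooks in the hook
factorization of `w`. -/
def lec (w : List ℕ) : ℕ := ((hookSplit w).2.map inv).sum

/-- A word `w(1) … w(r)` with `r ≥ 2` is a hook if
`w(1) > w(2) ≤ w(3) ≤ ⋯ ≤ w(r)`. -/
def IsHook (w : List ℕ) : Prop :=
  ∃ a b rest, w = a :: b :: rest ∧ b < a ∧ List.Chain' (· ≤ ·) (b :: rest)

/-- `w(i)` is a left-to-right maximum of `w` if `w(k) < w(i)` for all `k < i`. -/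
def IsLRMax (w : List ℕ) (i : ℕ) : Prop := ∀ k < i, w.getD k 0 < w.getD i 0

instance (w : List ℕ) (i : ℕ) : Decidable (IsLRMax w i) := by
  unfold IsLRMax; infer_instance

/-- `mix w` counts the pairs of positions `i < j` such that either
`w(i) > w(j)` and `w(i)` is a left-to-right maximum, or `w(i) < w(j)` and
there is `k < i` with `w(k) > w(j)`. -/
def mix (w : List ℕ) : ℕ :=
  ((Finset.range w.length ×ˢ Finset.range w.length).filter fun p =>
    p.1 < p.2 ∧ ((w.getD p.2 0 < w.getD p.1 0 ∧ IsLRMax w p.1) ∨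
      (w.getD p.1 0 < w.getD p.2 0 ∧ ∃ k ∈ Finset.range p.1, w.getD p.2 0 < w.getD k 0))).card

/-- `das w` counts the positions `i` such that either `w(i) > w(i+1)` and
`w(i)` is a left-to-right maximum, or `w(i) < w(i+1)` and there is `k < i`
with `w(k) > w(i+1)`. -/
def das (w : List ℕ) : ℕ :=
  ((Finset.range (w.length - 1)).filter fun i =>
    (w.getD (i + 1) 0 < w.getD i 0 ∧ IsLRMax w i) ∨
      (w.getD i 0 < w.getD (i + 1) 0 ∧ ∃ k ∈ Finset.range i, w.getD (i + 1) 0 < w.getD k 0)).card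

/-- The values of the left-to-right maxima of a word, listed in increasing
order (which is also their order of occurrence). -/
def lrMaxima : List ℕ → List ℕ
  | [] => []
  | x :: xs => x :: lrMaxima (xs.filter fun a => decide (x < a))
termination_by l => l.length
decreasing_by
  simp only [List.length_unattach, List.length_cons]
  exact Nat.lt_succ_of_le ((List.length_filter_le _ _).trans (List.length_attach).le)

/-- `Bset w m` is the list of entries of `w` that are smaller than `m` and lie
to the right of (the first occurrence of) `m` in `w`. -/
def Bset (w : List ℕ) (m : ℕ) : List ℕ :=
  ((w.dropWhile fun a => decide (a ≠ m)).tail).filter fun a => decide (a < m)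

/-- Helper for `psiS`: replace the letters satisfying `P`, in order, by the
letters of the first list. -/
def replaceSub (P : ℕ → Bool) : List ℕ → List ℕ → List ℕ
  | _, [] => []
  | rs, x :: xs =>
    if P x then rs.headD x :: replaceSub P rs.tail xs else x :: replaceSub P rs xs

/-- `psiS S w` is `ψ_S(w)`: the result of reversing, in place, the subword of
`w` consisting of the entries belonging to `S`. -/
def psiS (S : List ℕ) (w : List ℕ) : List ℕ :=
  replaceSub (fun a => decide (a ∈ S)) ((w.filter fun a => decide (a ∈ S)).reverse) w

/-- Helper applying the alternating composition
`ψ_{B₁} ∘ ψ_{B₂ ∩ B₁} ∘ ψ_{B₂} ∘ ⋯ ∘ ψ_{B_{k-1}} ∘ ψ_{B_k ∩ B_{k-1}} ∘ ψ_{B_k}`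
to `w`, given the list `[B_k, B_{k-1}, …, B₁]`. -/
def psiChain : List (List ℕ) → List ℕ → List ℕ
  | [], w => w
  | [B], w => psiS B w
  | B :: B' :: rest, w => psiChain (B' :: rest) (psiS (B.inter B') (psiS B w))

/-- The Brändén–Claesson bijection `ψ`. -/
def psi (w : List ℕ) : List ℕ :=
  psiChain (((lrMaxima w).map (Bset w)).reverse) w


section Aux

lemma des_nil' : des [] = 0 := rfl
lemma des_single (a : ℕ) : des [a] = 0 := rfl

lemma des_cons (a : ℕ) (l : List ℕ) (h : l ≠ []) :
    des (a :: l) = (if l.headD 0 < a then 1 else 0) + des l := by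
  rcases l with _ | ⟨b, t⟩
  · exact absurd rfl h
  simp only [des, List.length_cons, Nat.add_sub_cancel]
  rw [Finset.card_filter, Finset.card_filter, Finset.sum_range_succ']
  simp only [List.getD_cons_succ, List.getD_cons_zero, List.headD_cons]
  exact Nat.add_comm _ _

lemma getLastD_cons_of_ne_nil (a d : ℕ) (l : List ℕ) (h : l ≠ []) :
    (a :: l).getLastD d = l.getLastD d := by
  rcases l with _ | ⟨b, t⟩
  · exact absurd rfl h
  rfl

lemma des_append (u v : List ℕ) (hu : u ≠ []) (hv : v ≠ []) :
    des (u ++ v) = des u + ((if v.headD 0 < u.getLastD 0 then 1 else 0) + des v) := by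
  induction u with
  | nil => exact absurd rfl hu
  | cons a u ih =>
    rcases u with _ | ⟨b, t⟩
    · rw [List.cons_append, List.nil_append, des_cons a v hv, des_single]
      simp [List.getLastD]
    · rw [List.cons_append, des_cons a ((b :: t) ++ v) (by simp),
        des_cons a (b :: t) (by simp), ih (by simp),
        getLastD_cons_of_ne_nil a 0 (b :: t) (by simp)]
      have hh : ((b :: t) ++ v).headD 0 = (b :: t).headD 0 := rfl
      rw [hh]
      omega

lemma foldr_min_mem (x : ℕ) (xs : List ℕ) : xs.foldr min x ∈ x :: xs := by
  induction xs generalizing x with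
  | nil => simp
  | cons y ys ih =>
    simp only [List.foldr_cons]
    rcases min_choice y (ys.foldr min x) with h | h
    · rw [h]; simp
    · rw [h]
      rcases List.mem_cons.mp (ih x) with h' | h'
      · simp [h']
      · simp [h']

lemma foldr_min_le (x : ℕ) (xs : List ℕ) : ∀ a ∈ x :: xs, xs.foldr min x ≤ a := by
  induction xs generalizing x with
  | nil => simp
  | cons y ys ih =>
    intro a ha
    simp only [List.foldr_cons]
    rcases List.mem_cons.mp ha with rfl | ha
    · exact le_trans (min_le_right _ _) (ih a a (by simp))
    rcases List.mem_cons.mp ha with rfl | ha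
    · exact min_le_left _ _
    · exact le_trans (min_le_right _ _) (ih x a (by simp [ha]))

lemma foldr_min_eq (x : ℕ) (xs : List ℕ) (m : ℕ) (hm : m ∈ x :: xs)
    (hle : ∀ a ∈ x :: xs, m ≤ a) : xs.foldr min x = m :=
  le_antisymm (foldr_min_le x xs m hm) (hle _ (foldr_min_mem x xs))

lemma takeWhile_split (m : ℕ) (A B : List ℕ) (hA : ∀ a ∈ A, a ≠ m) :
    (A ++ m :: B).takeWhile (fun a => decide (a ≠ m)) = A ∧
    (A ++ m :: B).dropWhile (fun a => decide (a ≠ m)) = m :: B := by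
  induction A with
  | nil => simp
  | cons a A ih =>
    have h1 := hA a (by simp)
    have ih' := ih (fun a ha => hA a (by simp [ha]))
    rw [List.cons_append]
    rw [List.takeWhile_cons, List.dropWhile_cons]
    have h2 : (decide (a ≠ m)) = true := by simp [h1]
    rw [if_pos h2, if_pos h2, ih'.1, ih'.2]
    exact ⟨rfl, rfl⟩


lemma aix_split (m : ℕ) (A B : List ℕ) (hA : ∀ a ∈ A, m < a) (hB : ∀ a ∈ B, m ≤ a) :
    aix (A ++ m :: B) = if A = [] then 1 + aix B else if B = [] then 0 else aix A := by
  rcases A with _ | ⟨a, A⟩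
  · simp only [List.nil_append, if_pos rfl]
    rw [aix.eq_2]
    have hm : B.foldr min m = m :=
      foldr_min_eq m B m (by simp) (by
        intro b hb
        rcases List.mem_cons.mp hb with rfl | hb
        · exact le_rfl
        · exact hB b hb)
    rw [hm]
    have hs := takeWhile_split m [] B (by simp)
    simp only [List.nil_append] at hs
    rw [hs.1, hs.2]
    simp
  · have hne : a :: A ≠ [] := by simp
    rw [List.cons_append, aix.eq_2]
    have hm : (A ++ m :: B).foldr min a = m := by
      apply foldr_min_eq
      · simp
      · intro b hb
        rcases List.mem_cons.mp hb with rfl | hb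
        · exact le_of_lt (hA b (by simp))
        rcases List.mem_append.mp hb with hb | hb
        · exact le_of_lt (hA b (by simp [hb]))
        rcases List.mem_cons.mp hb with rfl | hb
        · exact le_rfl
        · exact hB b hb
    rw [hm]
    have hs := takeWhile_split m (a :: A) B (fun b hb => (hA b hb).ne')
    rw [← List.cons_append, hs.1, hs.2]
    simp only [List.tail_cons, if_neg hne]
    exact if_congr Iff.rfl rfl rfl

lemma fkt_nil (k : ℕ) : fkt k [] = [k] := by rw [fkt]

lemma fkt_of_lt (k : ℕ) (x : ℕ) (xs : List ℕ) (h : k < List.foldr min x xs) :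
    fkt k (x :: xs) = k :: x :: xs := by
  rw [fkt.eq_2, if_pos h]

lemma fkt_split (k m : ℕ) (A B : List ℕ) (hA : ∀ a ∈ A, m < a) (hB : ∀ a ∈ B, m ≤ a)
    (hk : m < k) :
    fkt k (A ++ m :: B) =
      if A = [] then fkt k B ++ [m] else if B = [] then k :: m :: A else fkt k A ++ m :: B := by
  rcases A with _ | ⟨a, A⟩
  · simp only [List.nil_append, if_pos rfl]
    rw [fkt.eq_2]
    have hm : B.foldr min m = m :=
      foldr_min_eq m B m (by simp) (by
        intro b hb
        rcases List.mem_cons.mp hb with rfl | hb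
        · exact le_rfl
        · exact hB b hb)
    rw [hm, if_neg (by omega)]
    have hs := takeWhile_split m [] B (by simp)
    simp only [List.nil_append] at hs
    rw [hs.1, hs.2]
    simp
  · have hne : a :: A ≠ [] := by simp
    rw [List.cons_append, fkt.eq_2]
    have hm : (A ++ m :: B).foldr min a = m := by
      apply foldr_min_eq
      · simp
      · intro b hb
        rcases List.mem_cons.mp hb with rfl | hb
        · exact le_of_lt (hA b (by simp))
        rcases List.mem_append.mp hb with hb | hb
        · exact le_of_lt (hA b (by simp [hb]))
        rcases List.mem_cons.mp hb with rfl | hb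
        · exact le_rfl
        · exact hB b hb
    rw [hm, if_neg (by omega)]
    have hs := takeWhile_split m (a :: A) B (fun b hb => (hA b hb).ne')
    rw [← List.cons_append, hs.1, hs.2]
    simp only [List.tail_cons, if_neg hne]
    exact if_congr Iff.rfl rfl rfl

lemma dropWhile_ne_head (m : ℕ) (l : List ℕ) (h : m ∈ l) :
    l.dropWhile (fun a => decide (a ≠ m)) = m :: (l.dropWhile (fun a => decide (a ≠ m))).tail := by
  induction l with
  | nil => simp at h
  | cons x xs ih =>
    rw [List.dropWhile_cons]
    by_cases hx : x = m
    · subst hx; simp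
    · have hd : decide (x ≠ m) = true := by simp [hx]
      rw [if_pos hd]
      refine ih ?_
      rcases List.mem_cons.mp h with rfl | h
      · exact absurd rfl hx
      · exact h

lemma fkt_perm (k : ℕ) : ∀ τ : List ℕ, List.Perm (fkt k τ) (k :: τ) := by
  suffices H : ∀ n (τ : List ℕ), τ.length = n → List.Perm (fkt k τ) (k :: τ) by
    exact fun τ => H τ.length τ rfl
  intro n
  induction n using Nat.strong_induction_on with
  | _ n ih =>
  intro τ hn
  subst hn
  rcases τ with _ | ⟨x, xs⟩
  · rw [fkt_nil]
  set m := xs.foldr min x with hmdef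
  have hmem : m ∈ x :: xs := foldr_min_mem x xs
  set A := (x :: xs).takeWhile (fun a => decide (a ≠ m)) with hAdef
  set D := (x :: xs).dropWhile (fun a => decide (a ≠ m)) with hDdef
  have hDm : D = m :: D.tail := dropWhile_ne_head m (x :: xs) hmem
  have hsplit : A ++ m :: D.tail = x :: xs := by
    have h1 := List.takeWhile_append_dropWhile (p := fun a => decide (a ≠ m)) (l := x :: xs)
    rw [← hAdef, ← hDdef, hDm] at h1
    exact h1
  have hlen : A.length + 1 + D.tail.length = xs.length + 1 := by
    have := congrArg List.length hsplit
    simp only [List.length_append, List.length_cons] at this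
    omega
  rw [fkt.eq_2, ← hmdef, ← hAdef, ← hDdef]
  split_ifs with h1 h2 h3
  · exact List.Perm.refl _
  · have ihB := ih D.tail.length (by simp only [List.length_cons]; omega) D.tail rfl
    refine (ihB.append_right [m]).trans ?_
    have he : (k :: D.tail) ++ [m] = k :: (D.tail ++ [m]) := rfl
    rw [he]
    refine ((List.perm_append_singleton m D.tail).cons k).trans ?_
    rw [show m :: D.tail = x :: xs from by rw [← hsplit, h2, List.nil_append]]
  · have hA : A ++ [m] = x :: xs := by rw [← hsplit, h3]
    exact (((List.perm_append_singleton m A).symm).cons k).trans (by rw [hA])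
  · have hAne : A ≠ [] := h2
    have hAlen : 0 < A.length := List.length_pos_iff.mpr hAne
    have ihA := ih A.length (by simp only [List.length_cons]; omega) A rfl
    refine (ihA.append_right (m :: D.tail)).trans ?_
    rw [show (k :: A) ++ m :: D.tail = k :: (A ++ m :: D.tail) from rfl, hsplit]

lemma fkt_ne_nil (k : ℕ) (τ : List ℕ) : fkt k τ ≠ [] := by
  intro h
  have := (fkt_perm k τ).length_eq
  rw [h] at this
  simp at this

lemma mem_fkt (k : ℕ) (τ : List ℕ) (a : ℕ) : a ∈ fkt k τ ↔ a = k ∨ a ∈ τ := by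
  rw [(fkt_perm k τ).mem_iff, List.mem_cons]

lemma aix_nil : aix [] = 0 := by rw [aix]

lemma aix_single (a : ℕ) : aix [a] = 1 := by
  have := aix_split a [] [] (by simp) (by simp)
  simpa [aix_nil] using this

lemma headD_mem (l : List ℕ) (h : l ≠ []) : l.headD 0 ∈ l := by
  rcases l with _ | ⟨a, t⟩
  · exact absurd rfl h
  · simp

lemma getLastD_mem (l : List ℕ) (h : l ≠ []) : l.getLastD 0 ∈ l := by
  induction l with
  | nil => exact absurd rfl h
  | cons a t ih =>
    rcases t with _ | ⟨b, t'⟩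
    · simp [List.getLastD]
    · rw [getLastD_cons_of_ne_nil a 0 _ (by simp)]
      exact List.mem_cons_of_mem a (ih (by simp))

lemma master (k : ℕ) : ∀ τ : List ℕ, τ.Nodup → k ∉ τ →
    (des (fkt k τ) = des τ ∧ aix (fkt k τ) = aix τ + 1) ∨
    (des τ < des (fkt k τ) ∧ aix (fkt k τ) = 0) := by
  suffices H : ∀ n (τ : List ℕ), τ.length = n → τ.Nodup → k ∉ τ →
      (des (fkt k τ) = des τ ∧ aix (fkt k τ) = aix τ + 1) ∨
      (des τ < des (fkt k τ) ∧ aix (fkt k τ) = 0) by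
    exact fun τ => H τ.length τ rfl
  intro n
  induction n using Nat.strong_induction_on with
  | _ n ih =>
  intro τ hn hnd hk
  subst hn
  rcases τ with _ | ⟨x, xs⟩
  · left
    rw [fkt_nil]
    refine ⟨rfl, ?_⟩
    rw [aix_single, aix_nil]
  set m := xs.foldr min x with hmdef
  have hmem : m ∈ x :: xs := foldr_min_mem x xs
  have hmin : ∀ a ∈ x :: xs, m ≤ a := foldr_min_le x xs
  have hkm : k ≠ m := fun h => hk (h ▸ hmem)
  rcases lt_or_gt_of_ne hkm with hklt | hkgt
  · -- k < m : fkt k τ = k :: τ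
    left
    rw [fkt_of_lt k x xs (hmdef ▸ hklt)]
    constructor
    · rw [des_cons k (x :: xs) (by simp)]
      have : ¬ ((x :: xs).headD 0 < k) := by
        have := hmin _ (headD_mem (x :: xs) (by simp))
        omega
      rw [if_neg this, Nat.zero_add]
    · have h2 : aix (k :: x :: xs) = 1 + aix (x :: xs) := by
        have := aix_split k [] (x :: xs)
          (by simp) (fun a ha => le_of_lt (lt_of_lt_of_le hklt (hmin a ha)))
        simpa using this
      rw [h2]
      omega
  -- m < k
  set A := (x :: xs).takeWhile (fun a => decide (a ≠ m)) with hAdef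
  set D := (x :: xs).dropWhile (fun a => decide (a ≠ m)) with hDdef
  set B := D.tail with hBdef
  have hDm : D = m :: B := dropWhile_ne_head m (x :: xs) hmem
  have hsplit : A ++ m :: B = x :: xs := by
    have h1 := List.takeWhile_append_dropWhile (p := fun a => decide (a ≠ m)) (l := x :: xs)
    rw [← hAdef, ← hDdef, hDm] at h1
    exact h1
  have hlen : A.length + 1 + B.length = xs.length + 1 := by
    have := congrArg List.length hsplit
    simp only [List.length_append, List.length_cons] at this
    omega
  rw [← hsplit] at hnd hk ⊢
  have hAnd : A.Nodup := hnd.of_append_left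
  have hBnd : B.Nodup := (hnd.of_append_right).of_cons
  have hdisj : ∀ a ∈ A, a ∉ m :: B := fun a ha hb =>
    (List.disjoint_of_nodup_append hnd) ha hb
  have hmA : m ∉ A := fun h => hdisj m h (by simp)
  have hmB : m ∉ B := fun h => (List.nodup_cons.mp hnd.of_append_right).1 h
  have hkA : k ∉ A := fun h => hk (List.mem_append.mpr (Or.inl h))
  have hkB : k ∉ B := fun h => hk (List.mem_append.mpr (Or.inr (by simp [h])))
  have hAgt : ∀ a ∈ A, m < a := fun a ha =>
    lt_of_le_of_ne (hmin a (by rw [← hsplit]; exact List.mem_append.mpr (Or.inl ha)))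
      (fun h => hmA (h ▸ ha))
  have hBgt : ∀ a ∈ B, m < a := fun a ha =>
    lt_of_le_of_ne (hmin a (by rw [← hsplit]; exact List.mem_append.mpr (Or.inr (by simp [ha]))))
      (fun h => hmB (h ▸ ha))
  have hBge : ∀ a ∈ B, m ≤ a := fun a ha => le_of_lt (hBgt a ha)
  rw [fkt_split k m A B hAgt hBge hkgt, aix_split m A B hAgt hBge]
  by_cases hA : A = []
  · -- fkt = fkt k B ++ [m]
    rw [if_pos hA, if_pos hA]
    right
    have hfgt : ∀ a ∈ fkt k B, m < a := by
      intro a ha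
      rcases (mem_fkt k B a).mp ha with rfl | ha
      · exact hkgt
      · exact hBgt a ha
    constructor
    · -- des (A ++ m :: B) < des (fkt k B ++ [m])
      rw [hA, List.nil_append]
      rw [des_append (fkt k B) [m] (fkt_ne_nil k B) (by simp)]
      have hlast : m < (fkt k B).getLastD 0 :=
        hfgt _ (getLastD_mem _ (fkt_ne_nil k B))
      rw [des_single]
      have hhead : ([m] : List ℕ).headD 0 = m := rfl
      rw [hhead, if_pos hlast]
      have hIH := ih B.length (by simp only [List.length_cons]; omega) B rfl hBnd hkB
      have hdesB : des (m :: B) = des B := by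
        rcases hB : B with _ | ⟨b, B'⟩
        · rfl
        · rw [← hB, des_cons m B (by simp [hB])]
          have : ¬ (B.headD 0 < m) := by
            have := hBgt _ (headD_mem B (by simp [hB]))
            omega
          rw [if_neg this, Nat.zero_add]
      rw [hdesB]
      rcases hIH with ⟨h1, _⟩ | ⟨h1, _⟩ <;> omega
    · -- aix (fkt k B ++ [m]) = 0
      have := aix_split m (fkt k B) [] hfgt (by simp)
      rw [if_neg (fkt_ne_nil k B), if_pos rfl] at this
      simpa using this
  · rw [if_neg hA, if_neg hA]
    have hAne : A ≠ [] := hA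
    by_cases hB : B = []
    · -- fkt = k :: m :: A
      rw [if_pos hB, if_pos hB]
      left
      constructor
      · rw [hB]
        rw [des_cons k (m :: A) (by simp), des_cons m A hAne]
        have h1 : (m :: A).headD 0 = m := rfl
        rw [h1, if_pos hkgt]
        have h2 : ¬ (A.headD 0 < m) := by
          have := hAgt _ (headD_mem A hAne)
          omega
        rw [if_neg h2, Nat.zero_add]
        rw [des_append A [m] hAne (by simp), des_single]
        have h3 : ([m] : List ℕ).headD 0 = m := rfl
        rw [h3, if_pos (hAgt _ (getLastD_mem A hAne))]
        omega
      · have := aix_split m [k] A (by simpa using hkgt) (fun a ha => le_of_lt (hAgt a ha))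
        rw [if_neg (by simp), if_neg hA] at this
        have hsing : ([k] : List ℕ) ++ m :: A = k :: m :: A := rfl
        rw [hsing] at this
        rw [this, aix_single]
    · -- general case
      rw [if_neg hB, if_neg hB]
      have hIH := ih A.length (by simp only [List.length_cons]; omega) A rfl hAnd hkA
      have hfgt : ∀ a ∈ fkt k A, m < a := by
        intro a ha
        rcases (mem_fkt k A a).mp ha with rfl | ha
        · exact hkgt
        · exact hAgt a ha
      have hd1 : des (fkt k A ++ m :: B) = des (fkt k A) + (1 + des B) := by
        rw [des_append (fkt k A) (m :: B) (fkt_ne_nil k A) (by simp)]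
        have hlast : m < (fkt k A).getLastD 0 := hfgt _ (getLastD_mem _ (fkt_ne_nil k A))
        have hhead : (m :: B).headD 0 = m := rfl
        rw [hhead, if_pos hlast, des_cons m B hB]
        have : ¬ (B.headD 0 < m) := by
          have := hBgt _ (headD_mem B hB)
          omega
        rw [if_neg this, Nat.zero_add]
      have hd2 : des (A ++ m :: B) = des A + (1 + des B) := by
        rw [des_append A (m :: B) hAne (by simp)]
        have hlast : m < A.getLastD 0 := hAgt _ (getLastD_mem _ hAne)
        have hhead : (m :: B).headD 0 = m := rfl
        rw [hhead, if_pos hlast, des_cons m B hB]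
        have : ¬ (B.headD 0 < m) := by
          have := hBgt _ (headD_mem B hB)
          omega
        rw [if_neg this, Nat.zero_add]
      have ha1 : aix (fkt k A ++ m :: B) = aix (fkt k A) := by
        have := aix_split m (fkt k A) B hfgt hBge
        rw [if_neg (fkt_ne_nil k A), if_neg hB] at this
        exact this
      rw [hd1, hd2, ha1]
      rcases hIH with ⟨h1, h2⟩ | ⟨h1, h2⟩
      · left; exact ⟨by omega, h2⟩
      · right; exact ⟨by omega, h2⟩

end Aux

/-- `des f(k,τ) = des τ` iff `aix f(k,τ) = aix τ + 1`
(in particular `aix f(k,τ) > 0`), and `des f(k,τ) > des τ` iff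
`aix f(k,τ) = 0`. -/
theorem des_fkt_iff_aix (k : ℕ) (τ : List ℕ) (hτ : τ.Nodup) (hk : k ∉ τ) :
    (des (fkt k τ) = des τ ↔ aix (fkt k τ) = aix τ + 1) ∧
    (des τ < des (fkt k τ) ↔ aix (fkt k τ) = 0) := by
  rcases master k τ hτ hk with ⟨h1, h2⟩ | ⟨h1, h2⟩ <;>
    exact ⟨⟨fun _ => by omega, fun _ => by omega⟩, ⟨fun _ => by omega, fun _ => by omega⟩⟩

end PaperStats
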